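/- Let k be a nonzero complex number and let F : ℂ × ℂ → ℂ be analytic at (0,0). Define, for (w,u) ∈ ℂ² with w ≠ 0, u ≠ 0 and u − k·w ≠ 0, g(w,u) = −u·(u − k·w)·( F(w,u)/(w·u) + F(−w, u − k·w)/(−w·(u − k·w)) ). Then: (a) there exists H analytic at (0,0) such that g(w,u) = k·F(w,u) + u·H(w,u) for all such (w,u) in a neighborhood of (0,0); in particular (b) g(w,u) tends to k·F(0,0) as (w,u) → (0,0) within the set { (w,u) : w·u·(u−k·w) ≠ 0 }. -/

import Mathlib

open Filter Finset
open scoped ENNReal NNReal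

noncomputable def rhoSeries (p : FormalMultilinearSeries ℂ (ℂ × ℂ) ℂ)
    (L : (ℂ × ℂ) →L[ℂ] ℂ × ℂ) (c : ℂ × ℂ) :
    FormalMultilinearSeries ℂ ((ℂ × ℂ) × ℂ) ℂ := fun n =>
  match n with
  | 0 => 0
  | n + 1 =>
      ∑ i : Fin (n + 1), (p (n + 1)).compContinuousLinearMap fun j =>
        if (j : ℕ) < (i : ℕ) then
          L.comp (ContinuousLinearMap.fst ℂ (ℂ × ℂ) ℂ)
        else if (j : ℕ) = (i : ℕ) then
          (ContinuousLinearMap.snd ℂ (ℂ × ℂ) ℂ).smulRight c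
        else ContinuousLinearMap.fst ℂ (ℂ × ℂ) ℂ


lemma rho_zero (p : FormalMultilinearSeries ℂ (ℂ × ℂ) ℂ)
    (L : (ℂ × ℂ) →L[ℂ] ℂ × ℂ) (c : ℂ × ℂ) : rhoSeries p L c 0 = 0 := rfl

lemma rho_apply (p : FormalMultilinearSeries ℂ (ℂ × ℂ) ℂ)
    (L : (ℂ × ℂ) →L[ℂ] ℂ × ℂ) (c : ℂ × ℂ) (n : ℕ) (x : ℂ × ℂ) (a : ℂ) :
    rhoSeries p L c (n + 1) (fun _ => (x, a)) =
      ∑ i : Fin (n + 1), (p (n + 1))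
        (Function.update
          (fun j : Fin (n + 1) => if (j : ℕ) < (i : ℕ) then L x else x) i (a • c)) := by
  show (∑ i : Fin (n+1), (p (n+1)).compContinuousLinearMap _) (fun _ => (x, a)) = _
  rw [ContinuousMultilinearMap.sum_apply]
  refine Finset.sum_congr rfl fun i _ => ?_
  rw [ContinuousMultilinearMap.compContinuousLinearMap_apply]
  congr 1
  funext j
  by_cases hji : j = i
  · subst hji
    simp [Function.update_self]
  · have hv : (j : ℕ) ≠ (i : ℕ) := fun h => hji (Fin.ext h)
    rw [Function.update_of_ne hji]
    by_cases hlt : (j : ℕ) < (i : ℕ) <;> simp [hlt, hv]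

lemma rho_smul (p : FormalMultilinearSeries ℂ (ℂ × ℂ) ℂ)
    (L : (ℂ × ℂ) →L[ℂ] ℂ × ℂ) (c : ℂ × ℂ) (n : ℕ) (x : ℂ × ℂ) (a b : ℂ) :
    b * rhoSeries p L c n (fun _ => (x, a)) = a * rhoSeries p L c n (fun _ => (x, b)) := by
  cases n with
  | zero => show b * (0 : ContinuousMultilinearMap ℂ _ ℂ) _ = a * (0 : ContinuousMultilinearMap ℂ _ ℂ) _; simp
  | succ n =>
      rw [rho_apply, rho_apply, Finset.mul_sum, Finset.mul_sum]
      refine Finset.sum_congr rfl fun i _ => ?_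
      rw [ContinuousMultilinearMap.map_update_smul, ContinuousMultilinearMap.map_update_smul]
      simp only [smul_eq_mul]
      ring

lemma rho_diag (p : FormalMultilinearSeries ℂ (ℂ × ℂ) ℂ)
    (L : (ℂ × ℂ) →L[ℂ] ℂ × ℂ) (c : ℂ × ℂ) (hL : ∀ x : ℂ × ℂ, L x = x + x.1 • c)
    (n : ℕ) (x : ℂ × ℂ) :
    rhoSeries p L c n (fun _ => (x, x.1)) =
      p n (fun _ => L x) - p n (fun _ => x) := by
  cases n with
  | zero =>
      show (0 : ContinuousMultilinearMap ℂ _ ℂ) _ = _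
      have : (fun _ : Fin 0 => L x) = fun _ : Fin 0 => x := funext fun j => j.elim0
      rw [this]
      simp
  | succ n =>
      rw [rho_apply]
      have hsub : x.1 • c = L x - x := by rw [hL x]; abel
      have key : ∀ i : Fin (n + 1),
          (p (n + 1)) (Function.update
            (fun j : Fin (n + 1) => if (j : ℕ) < (i : ℕ) then L x else x) i (x.1 • c))
          = (fun m : ℕ => p (n + 1) (fun j : Fin (n+1) => if (j : ℕ) < m then L x else x)) ((i : ℕ) + 1)
            - (fun m : ℕ => p (n + 1) (fun j : Fin (n+1) => if (j : ℕ) < m then L x else x)) (i : ℕ) := by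
        intro i
        rw [hsub, ContinuousMultilinearMap.map_update_sub]
        congr 1
        · congr 1
          funext j
          by_cases hji : j = i
          · subst hji; simp [Function.update_self]
          · have hv : (j : ℕ) ≠ (i : ℕ) := fun h => hji (Fin.ext h)
            rw [Function.update_of_ne hji]
            by_cases hlt : (j : ℕ) < (i : ℕ)
            · simp [hlt, Nat.lt_succ_of_lt hlt]
            · have : ¬ ((j : ℕ) < (i : ℕ) + 1) := by omega
              simp [hlt, this]
        · congr 1
          funext j
          by_cases hji : j = i
          · subst hji; simp [Function.update_self]
          · rw [Function.update_of_ne hji]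
      set f : ℕ → ℂ := fun m => p (n + 1) (fun j : Fin (n+1) => if (j : ℕ) < m then L x else x) with hf
      calc (∑ i : Fin (n + 1), (p (n + 1)) (Function.update
            (fun j : Fin (n + 1) => if (j : ℕ) < (i : ℕ) then L x else x) i (x.1 • c)))
          = ∑ i : Fin (n+1), (fun m => f (m+1) - f m) (i : ℕ) :=
            Finset.sum_congr rfl fun i _ => key i
        _ = ∑ i ∈ Finset.range (n+1), (fun m => f (m+1) - f m) i :=
            by exact Fin.sum_univ_eq_sum_range (fun m => f (m + 1) - f m) (n + 1)
        _ = f (n+1) - f 0 := by simpa using Finset.sum_range_sub f (n+1)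
        _ = _ := by
            have h1 : f (n+1) = p (n+1) (fun _ : Fin (n+1) => L x) := by
              simp only [hf]
              congr 1
              funext j
              simp [j.isLt]
            have h2 : f 0 = p (n+1) (fun _ : Fin (n+1) => x) := by
              simp only [hf]
              congr 1
            rw [h1, h2]

lemma rho_norm (p : FormalMultilinearSeries ℂ (ℂ × ℂ) ℂ)
    (L : (ℂ × ℂ) →L[ℂ] ℂ × ℂ) (c : ℂ × ℂ) (M : ℝ)
    (h1 : ‖L.comp (ContinuousLinearMap.fst ℂ (ℂ × ℂ) ℂ)‖ ≤ M)
    (h2 : ‖(ContinuousLinearMap.snd ℂ (ℂ × ℂ) ℂ).smulRight c‖ ≤ M)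
    (h3 : ‖(ContinuousLinearMap.fst ℂ (ℂ × ℂ) ℂ : (ℂ × ℂ) × ℂ →L[ℂ] ℂ × ℂ)‖ ≤ M)
    (n : ℕ) :
    ‖rhoSeries p L c (n + 1)‖ ≤ (n + 1 : ℝ) * (‖p (n + 1)‖ * M ^ (n + 1)) := by
  have hM : 0 ≤ M := le_trans (norm_nonneg _) h3
  refine le_trans (norm_sum_le _ _) ?_
  have hterm : ∀ i : Fin (n + 1),
      ‖(p (n + 1)).compContinuousLinearMap fun j : Fin (n+1) =>
        if (j : ℕ) < (i : ℕ) then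
          L.comp (ContinuousLinearMap.fst ℂ (ℂ × ℂ) ℂ)
        else if (j : ℕ) = (i : ℕ) then
          (ContinuousLinearMap.snd ℂ (ℂ × ℂ) ℂ).smulRight c
        else ContinuousLinearMap.fst ℂ (ℂ × ℂ) ℂ‖
      ≤ ‖p (n + 1)‖ * M ^ (n + 1) := by
    intro i
    refine le_trans (ContinuousMultilinearMap.norm_compContinuousLinearMap_le _ _) ?_
    refine mul_le_mul_of_nonneg_left ?_ (norm_nonneg _)
    calc (∏ j : Fin (n+1), ‖if (j : ℕ) < (i : ℕ) then
            L.comp (ContinuousLinearMap.fst ℂ (ℂ × ℂ) ℂ)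
          else if (j : ℕ) = (i : ℕ) then
            (ContinuousLinearMap.snd ℂ (ℂ × ℂ) ℂ).smulRight c
          else ContinuousLinearMap.fst ℂ (ℂ × ℂ) ℂ‖)
        ≤ ∏ _j : Fin (n+1), M := by
          refine Finset.prod_le_prod (fun j _ => norm_nonneg _) (fun j _ => ?_)
          split_ifs
          · exact h1
          · exact h2
          · exact h3
      _ = M ^ (n + 1) := by simp
  calc (∑ i : Fin (n+1), ‖(p (n + 1)).compContinuousLinearMap fun j : Fin (n+1) =>
        if (j : ℕ) < (i : ℕ) then
          L.comp (ContinuousLinearMap.fst ℂ (ℂ × ℂ) ℂ)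
        else if (j : ℕ) = (i : ℕ) then
          (ContinuousLinearMap.snd ℂ (ℂ × ℂ) ℂ).smulRight c
        else ContinuousLinearMap.fst ℂ (ℂ × ℂ) ℂ‖)
      ≤ ∑ _i : Fin (n+1), (‖p (n + 1)‖ * M ^ (n + 1)) :=
        Finset.sum_le_sum fun i _ => hterm i
    _ = (n + 1 : ℝ) * (‖p (n + 1)‖ * M ^ (n + 1)) := by
        simp [Finset.sum_const, nsmul_eq_mul]

set_option maxHeartbeats 1600000 in
lemma division_lemma (k : ℂ) (F : ℂ × ℂ → ℂ) (hF : AnalyticAt ℂ F (0, 0)) :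
    ∃ H : ℂ × ℂ → ℂ, AnalyticAt ℂ H (0, 0) ∧
      ∀ᶠ x : ℂ × ℂ in nhds (0, 0), x.1 ≠ 0 →
        x.1 * H x = F (-x.1, x.2 - k * x.1) - F x := by
  classical
  set c : ℂ × ℂ := (-2, -k) with hc
  set L : (ℂ × ℂ) →L[ℂ] ℂ × ℂ :=
    ContinuousLinearMap.id ℂ (ℂ × ℂ) + (ContinuousLinearMap.fst ℂ ℂ ℂ).smulRight c with hLdef
  have hL : ∀ x : ℂ × ℂ, L x = x + x.1 • c := by
    intro x
    simp [hLdef]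
  have hLx : ∀ x : ℂ × ℂ, L x = (-x.1, x.2 - k * x.1) := by
    intro x
    rw [hL x]
    apply Prod.ext <;> simp [hc, Prod.smul_def] <;> ring
  have hF0 : AnalyticAt ℂ F 0 := hF
  obtain ⟨p, hpA⟩ := hF0
  obtain ⟨R, hp⟩ := hpA
  -- pick s with 0 < s < min R 1
  obtain ⟨s, hs0, hsR⟩ := ENNReal.lt_iff_exists_nnreal_btwn.mp
    (lt_min hp.r_pos (zero_lt_one : (0:ℝ≥0∞) < 1))
  have hs0' : (0:ℝ) < s := by exact_mod_cast hs0
  have hsR' : (s : ℝ≥0∞) < R := lt_of_lt_of_le hsR (min_le_left _ _)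
  have hs1 : (s : ℝ) ≤ 1 := by
    have := lt_of_lt_of_le hsR (min_le_right _ _)
    have : s < 1 := by exact_mod_cast this
    exact_mod_cast this.le
  set M : ℝ := max ‖L.comp (ContinuousLinearMap.fst ℂ (ℂ × ℂ) ℂ)‖
    (max ‖(ContinuousLinearMap.snd ℂ (ℂ × ℂ) ℂ).smulRight c‖
      ‖(ContinuousLinearMap.fst ℂ (ℂ × ℂ) ℂ : (ℂ × ℂ) × ℂ →L[ℂ] ℂ × ℂ)‖) + 1 with hMdef
  have hM1 : (1:ℝ) ≤ M := by
    have : (0:ℝ) ≤ max ‖L.comp (ContinuousLinearMap.fst ℂ (ℂ × ℂ) ℂ)‖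
        (max ‖(ContinuousLinearMap.snd ℂ (ℂ × ℂ) ℂ).smulRight c‖
          ‖(ContinuousLinearMap.fst ℂ (ℂ × ℂ) ℂ : (ℂ × ℂ) × ℂ →L[ℂ] ℂ × ℂ)‖) :=
      le_max_of_le_left (norm_nonneg _)
    linarith [this]
  have hM0 : (0:ℝ) < M := lt_of_lt_of_le one_pos hM1
  set t : ℝ := (s : ℝ) / (2 * M) with htdef
  have ht0 : 0 < t := div_pos hs0' (by linarith)
  -- summability of ‖rho n‖ t^n
  have hsump : Summable (fun n => ‖p n‖ * (s : ℝ) ^ n) :=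
    p.summable_norm_mul_pow (lt_of_lt_of_le hsR' hp.r_le)
  have hbound : ∀ n : ℕ, ‖rhoSeries p L c n‖ * t ^ n ≤ ‖p n‖ * (s:ℝ) ^ n := by
    intro n
    cases n with
    | zero =>
        simp [rho_zero]
    | succ n =>
        have h1 : ‖L.comp (ContinuousLinearMap.fst ℂ (ℂ × ℂ) ℂ)‖ ≤ M := by
          rw [hMdef]; linarith [le_max_left ‖L.comp (ContinuousLinearMap.fst ℂ (ℂ × ℂ) ℂ)‖
            (max ‖(ContinuousLinearMap.snd ℂ (ℂ × ℂ) ℂ).smulRight c‖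
              ‖(ContinuousLinearMap.fst ℂ (ℂ × ℂ) ℂ : (ℂ × ℂ) × ℂ →L[ℂ] ℂ × ℂ)‖)]
        have h2 : ‖(ContinuousLinearMap.snd ℂ (ℂ × ℂ) ℂ).smulRight c‖ ≤ M := by
          have := (le_max_left ‖(ContinuousLinearMap.snd ℂ (ℂ × ℂ) ℂ).smulRight c‖
            ‖(ContinuousLinearMap.fst ℂ (ℂ × ℂ) ℂ : (ℂ × ℂ) × ℂ →L[ℂ] ℂ × ℂ)‖).trans
            (le_max_right ‖L.comp (ContinuousLinearMap.fst ℂ (ℂ × ℂ) ℂ)‖ _)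
          rw [hMdef]; linarith [this]
        have h3 : ‖(ContinuousLinearMap.fst ℂ (ℂ × ℂ) ℂ : (ℂ × ℂ) × ℂ →L[ℂ] ℂ × ℂ)‖ ≤ M := by
          have := (le_max_right ‖(ContinuousLinearMap.snd ℂ (ℂ × ℂ) ℂ).smulRight c‖
            ‖(ContinuousLinearMap.fst ℂ (ℂ × ℂ) ℂ : (ℂ × ℂ) × ℂ →L[ℂ] ℂ × ℂ)‖).trans
            (le_max_right ‖L.comp (ContinuousLinearMap.fst ℂ (ℂ × ℂ) ℂ)‖ _)
          rw [hMdef]; linarith [this]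
        have key := rho_norm p L c M h1 h2 h3 n
        have hMt : M * t = (s:ℝ) / 2 := by
          rw [htdef]; field_simp
        have hpow : M ^ (n+1) * t ^ (n+1) = ((s:ℝ)/2) ^ (n+1) := by
          rw [← mul_pow, hMt]
        have hnp : ((n:ℝ) + 1) ≤ 2 ^ (n+1) := by
          have h' : (n:ℝ) < 2 ^ n := by exact_mod_cast Nat.lt_two_pow_self (n := n)
          have h1n : (1:ℝ) ≤ 2 ^ n := one_le_pow₀ (by norm_num)
          rw [pow_succ]
          nlinarith [h', h1n]
        calc ‖rhoSeries p L c (n+1)‖ * t ^ (n+1)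
            ≤ ((n:ℝ)+1) * (‖p (n+1)‖ * M ^ (n+1)) * t ^ (n+1) := by
              refine mul_le_mul_of_nonneg_right ?_ (by positivity)
              exact_mod_cast key
          _ = ((n:ℝ)+1) * ‖p (n+1)‖ * ((s:ℝ)/2) ^ (n+1) := by
              rw [← hpow]; ring
          _ = ((n:ℝ)+1) / 2 ^ (n+1) * (‖p (n+1)‖ * (s:ℝ) ^ (n+1)) := by
              rw [div_pow]
              field_simp
          _ ≤ 1 * (‖p (n+1)‖ * (s:ℝ) ^ (n+1)) := by
              refine mul_le_mul_of_nonneg_right ?_ (by positivity)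
              rw [div_le_one (by positivity)]
              exact hnp
          _ = ‖p (n+1)‖ * (s:ℝ) ^ (n+1) := one_mul _
  have hsumrho : Summable (fun n => ‖rhoSeries p L c n‖ * t ^ n) :=
    Summable.of_nonneg_of_le (fun n => by positivity) hbound hsump
  set tnn : ℝ≥0 := ⟨t, ht0.le⟩ with htnn
  have hrad : (tnn : ℝ≥0∞) ≤ (rhoSeries p L c).radius := by
    apply FormalMultilinearSeries.le_radius_of_summable_norm
    convert hsumrho using 2
    rfl
  have hradpos : 0 < (rhoSeries p L c).radius :=
    lt_of_lt_of_le (by exact_mod_cast ht0) hrad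
  have Kball := (rhoSeries p L c).hasFPowerSeriesOnBall hradpos
  set K : (ℂ × ℂ) × ℂ → ℂ := (rhoSeries p L c).sum with hK
  have ballmem : ∀ y : (ℂ × ℂ) × ℂ, ‖y‖ < t →
      y ∈ Metric.eball (0 : (ℂ × ℂ) × ℂ) (rhoSeries p L c).radius := by
    intro y hy
    rw [EMetric.mem_ball, edist_zero_right, enorm_eq_nnnorm]
    refine lt_of_lt_of_le ?_ hrad
    rw [ENNReal.coe_lt_coe, ← NNReal.coe_lt_coe]
    exact hy
  set ε : ℝ := t / 2 with hεdef
  have hε0 : 0 < ε := by positivity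
  set H : ℂ × ℂ → ℂ := fun x => ((ε : ℂ))⁻¹ * K (x, (ε : ℂ)) with hHdef
  have hmemε0 : (((0,0) : ℂ × ℂ), (ε : ℂ)) ∈
      Metric.eball (0 : (ℂ × ℂ) × ℂ) (rhoSeries p L c).radius := by
    apply ballmem
    rw [Prod.norm_def]
    have h1 : ‖(((0,0)) : ℂ × ℂ)‖ = 0 := by simp [Prod.norm_def]
    have h2 : ‖((ε : ℝ) : ℂ)‖ = ε := by
      rw [Complex.norm_real, Real.norm_eq_abs, abs_of_pos hε0]
    rw [h1, h2]
    have : max (0:ℝ) ε = ε := max_eq_right hε0.le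
    rw [this, hεdef]
    linarith
  have hKat : AnalyticAt ℂ K (((0,0) : ℂ × ℂ), (ε : ℂ)) := Kball.analyticAt_of_mem hmemε0
  have hfa : AnalyticAt ℂ (fun x : ℂ × ℂ => (x, ((ε:ℝ) : ℂ))) ((0,0) : ℂ × ℂ) :=
    analyticAt_id.prod analyticAt_const
  have hcomp : AnalyticAt ℂ (fun x : ℂ × ℂ => K (x, ((ε:ℝ) : ℂ))) ((0,0) : ℂ × ℂ) :=
    AnalyticAt.comp (g := K) (f := fun x : ℂ × ℂ => (x, ((ε:ℝ) : ℂ))) hKat hfa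
  have hHa : AnalyticAt ℂ H ((0,0) : ℂ × ℂ) := analyticAt_const.mul hcomp
  refine ⟨H, hHa, ?_⟩
  set δ : ℝ := min (t/2) ((s:ℝ)/(‖L‖+1)) with hδdef
  have hnL : (0:ℝ) < ‖L‖ + 1 := by positivity
  have hδ0 : 0 < δ := lt_min (by positivity) (by positivity)
  filter_upwards [Metric.ball_mem_nhds (0 : ℂ × ℂ) hδ0] with x hx _hx1
  rw [mem_ball_zero_iff] at hx
  have hxt : ‖x‖ < t/2 := lt_of_lt_of_le hx (min_le_left _ _)
  have hxl : ‖x‖ < (s:ℝ)/(‖L‖+1) := lt_of_lt_of_le hx (min_le_right _ _)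
  have hxs : ‖x‖ < (s:ℝ) := lt_of_lt_of_le hxl (div_le_self hs0'.le (by linarith [norm_nonneg L]))
  have hxball : x ∈ Metric.eball (0 : ℂ × ℂ) R := by
    rw [EMetric.mem_ball, edist_zero_right, enorm_eq_nnnorm]
    refine lt_of_lt_of_le ?_ (le_of_lt hsR')
    exact ENNReal.coe_lt_coe.mpr (by rw [← NNReal.coe_lt_coe]; simpa [coe_nnnorm] using hxs)
  have hLxball : L x ∈ Metric.eball (0 : ℂ × ℂ) R := by
    have h1 := L.le_opNorm x
    have h2 : (‖L‖+1) * ‖x‖ < (‖L‖+1) * ((s:ℝ)/(‖L‖+1)) := mul_lt_mul_of_pos_left hxl hnL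
    have h3 : (‖L‖+1) * ((s:ℝ)/(‖L‖+1)) = s := by field_simp
    have h4 : ‖L x‖ < (s:ℝ) := by nlinarith [norm_nonneg x]
    rw [EMetric.mem_ball, edist_zero_right, enorm_eq_nnnorm]
    refine lt_of_lt_of_le ?_ (le_of_lt hsR')
    exact ENNReal.coe_lt_coe.mpr (by rw [← NNReal.coe_lt_coe]; simpa [coe_nnnorm] using h4)
  have hmw : ((x, x.1) : (ℂ × ℂ) × ℂ) ∈
      Metric.eball (0 : (ℂ × ℂ) × ℂ) (rhoSeries p L c).radius := by
    apply ballmem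
    rw [Prod.norm_def]
    have h1 : ‖x.1‖ ≤ ‖x‖ := norm_fst_le x
    exact max_lt (by linarith) (by linarith)
  have hmε : ((x, ((ε:ℝ) : ℂ)) : (ℂ × ℂ) × ℂ) ∈
      Metric.eball (0 : (ℂ × ℂ) × ℂ) (rhoSeries p L c).radius := by
    apply ballmem
    rw [Prod.norm_def]
    have h2 : ‖((ε : ℝ) : ℂ)‖ = ε := by
      rw [Complex.norm_real, Real.norm_eq_abs, abs_of_pos hε0]
    rw [h2]
    have : ε < t := by rw [hεdef]; linarith
    exact max_lt (by linarith) this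
  have hSw : HasSum (fun n => rhoSeries p L c n (fun _ => (x, x.1))) (K (x, x.1)) := by
    simpa using Kball.hasSum hmw
  have hSε : HasSum (fun n => rhoSeries p L c n (fun _ => (x, ((ε:ℝ):ℂ)))) (K (x, ((ε:ℝ):ℂ))) := by
    simpa using Kball.hasSum hmε
  have hSF : HasSum (fun n => p n (fun _ => L x) - p n (fun _ => x)) (F (L x) - F x) := by
    simpa using (hp.hasSum hLxball).sub (hp.hasSum hxball)
  have hKw : K (x, x.1) = F (L x) - F x := by
    have heq : (fun n => rhoSeries p L c n (fun _ => (x, x.1))) =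
        fun n => p n (fun _ => L x) - p n (fun _ => x) :=
      funext fun n => rho_diag p L c hL n x
    rw [heq] at hSw
    exact hSw.unique hSF
  have hscal : x.1 * K (x, ((ε:ℝ):ℂ)) = ((ε:ℝ):ℂ) * K (x, x.1) := by
    have hA := hSε.mul_left x.1
    have hB := hSw.mul_left (((ε:ℝ):ℂ))
    have heq : (fun n => x.1 * rhoSeries p L c n (fun _ => (x, ((ε:ℝ):ℂ)))) =
        fun n => ((ε:ℝ):ℂ) * rhoSeries p L c n (fun _ => (x, x.1)) :=
      funext fun n => rho_smul p L c n x _ _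
    rw [heq] at hA
    exact hA.unique hB
  have hεne : (((ε:ℝ)):ℂ) ≠ 0 := by exact_mod_cast hε0.ne'
  rw [← hLx x]
  calc x.1 * H x = ((ε:ℝ):ℂ)⁻¹ * (x.1 * K (x, ((ε:ℝ):ℂ))) := by rw [hHdef]; ring
    _ = ((ε:ℝ):ℂ)⁻¹ * (((ε:ℝ):ℂ) * K (x, x.1)) := by rw [hscal]
    _ = K (x, x.1) := by field_simp
    _ = F (L x) - F x := hKw

/-- **Analytic continuation of the pole part** (equation (gFH) in the proof of
Theorem 5.11 of Gasparim–Liu): for `k ≠ 0` and `F` analytic at `(0,0)`, the function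
`g(w,u) = −u(u−kw)·(F(w,u)/(wu) + F(−w,u−kw)/(−w(u−kw)))`, defined where
`w·u·(u−kw) ≠ 0`, satisfies `g = k·F + u·H` for some `H` analytic at `(0,0)`, and in
particular `g(w,u) → k·F(0,0)` as `(w,u) → (0,0)` within the domain. -/
theorem pole_part_extension (k : ℂ) (hk : k ≠ 0) (F : ℂ × ℂ → ℂ)
    (hF : AnalyticAt ℂ F (0, 0)) (g : ℂ × ℂ → ℂ)
    (hg : ∀ p : ℂ × ℂ, p.1 ≠ 0 → p.2 ≠ 0 → p.2 - k * p.1 ≠ 0 →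
      g p = -p.2 * (p.2 - k * p.1) *
        (F p / (p.1 * p.2)
          + F (-p.1, p.2 - k * p.1) / (-(p.1 * (p.2 - k * p.1))))) :
    (∃ H : ℂ × ℂ → ℂ, AnalyticAt ℂ H (0, 0) ∧
        ∀ᶠ p : ℂ × ℂ in nhds (0, 0),
          p.1 ≠ 0 → p.2 ≠ 0 → p.2 - k * p.1 ≠ 0 →
            g p = k * F p + p.2 * H p) ∧
      Filter.Tendsto g
        (nhdsWithin (0, 0) {p : ℂ × ℂ | p.1 * p.2 * (p.2 - k * p.1) ≠ 0})
        (nhds (k * F (0, 0))) := by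

  obtain ⟨H, hHa, hEv⟩ := division_lemma k F hF
  have hmain : ∀ᶠ p : ℂ × ℂ in nhds (0, 0),
      p.1 ≠ 0 → p.2 ≠ 0 → p.2 - k * p.1 ≠ 0 → g p = k * F p + p.2 * H p := by
    filter_upwards [hEv] with q hq h1 h2 h3
    have hid := hq h1
    rw [hg q h1 h2 h3]
    have hHq : H q = (F (-q.1, q.2 - k * q.1) - F q) / q.1 := by
      rw [eq_div_iff h1]
      linear_combination hid
    rw [hHq]
    field_simp
    ring
  refine ⟨⟨H, hHa, hmain⟩, ?_⟩
  have h0 : (fun q : ℂ × ℂ => k * F q + q.2 * H q) (0, 0) = k * F (0, 0) := by simp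
  have hcont : ContinuousAt (fun q : ℂ × ℂ => k * F q + q.2 * H q) (0, 0) :=
    (continuousAt_const.mul hF.continuousAt).add
      (continuous_snd.continuousAt.mul hHa.continuousAt)
  have hlim : Filter.Tendsto (fun q : ℂ × ℂ => k * F q + q.2 * H q)
      (nhdsWithin (0, 0) {p : ℂ × ℂ | p.1 * p.2 * (p.2 - k * p.1) ≠ 0})
      (nhds (k * F (0, 0))) := by
    have := hcont.tendsto
    have h0' : k * F (0, 0) + ((0, 0) : ℂ × ℂ).2 * H (0, 0) = k * F (0, 0) := by simp
    rw [h0'] at this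
    exact this.mono_left nhdsWithin_le_nhds
  refine Filter.Tendsto.congr' ?_ hlim
  filter_upwards [hmain.filter_mono nhdsWithin_le_nhds, eventually_mem_nhdsWithin]
    with q hq hqS
  have h1 : q.1 ≠ 0 := by
    intro h; exact hqS (by rw [h, zero_mul, zero_mul])
  have h2 : q.2 ≠ 0 := by
    intro h; exact hqS (by rw [h, mul_zero, zero_mul])
  have h3 : q.2 - k * q.1 ≠ 0 := by
    intro h; exact hqS (by rw [h, mul_zero])
  exact (hq h1 h2 h3).symm
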